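/- Let (X, →, ≤) be an ordered transition system with downward transitive monotonicity, and suppose there exist states x, y ∈ X with x →+ y and y ≤ x. Then the system does not terminate from x: there exists an infinite run x = x_0 → x_1 → x_2 → ⋯. -/
import Mathlib


/-- In an ordered transition system with downward transitive
monotonicity, if `x →+ y` and `y ≤ x`, then there is an infinite run from `x`. -/
theorem stmt_11 {X : Type*} (step le : X → X → Prop)
    (hrefl : ∀ x, le x x)
    (htrans : ∀ x y z, le x y → le y z → le x z)
    (hdown : ∀ a b a', step a b → le a' a →
      ∃ b', le b' b ∧ Relation.TransGen step a' b')
    (x y : X) (hxy : Relation.TransGen step x y) (hyx : le y x) :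
    ∃ f : ℕ → X, f 0 = x ∧ ∀ n, step (f n) (f (n + 1)) := by
  classical
  -- downward monotonicity for transitive closure
  have hdownT : ∀ a b a', Relation.TransGen step a b → le a' a →
      ∃ b', le b' b ∧ Relation.TransGen step a' b' := by
    intro a b a' hab
    induction hab with
    | single h => intro h'; exact hdown _ _ _ h h'
    | tail hab hbc ih =>
      intro h'
      obtain ⟨b', hb', hab'⟩ := ih h'
      obtain ⟨c', hc', hbc'⟩ := hdown _ _ _ hbc hb'
      exact ⟨c', hc', hab'.trans hbc'⟩
  -- invariant
  set D : X → Prop := fun a => ∃ b, Relation.TransGen step a b ∧ le b x with hD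
  have hDx : D x := ⟨y, hxy, hyx⟩
  have hstepD : ∀ a, D a → ∃ b, step a b ∧ D b := by
    rintro a ⟨c, hac, hcx⟩
    obtain ⟨m, ham, hmc⟩ := Relation.TransGen.head'_iff.mp hac
    rcases Relation.reflTransGen_iff_eq_or_transGen.mp hmc with rfl | hmc'
    · obtain ⟨y', hy', hcy'⟩ := hdownT x y c hxy hcx
      exact ⟨c, ham, y', hcy', htrans _ _ _ hy' hyx⟩
    · exact ⟨m, ham, c, hmc', hcx⟩
  let f : ℕ → {a // D a} := fun n =>
    Nat.rec ⟨x, hDx⟩ (fun _ p => ⟨Classical.choose (hstepD p.1 p.2),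
      (Classical.choose_spec (hstepD p.1 p.2)).2⟩) n
  refine ⟨fun n => (f n).1, rfl, fun n => ?_⟩
  exact (Classical.choose_spec (hstepD (f n).1 (f n).2)).1
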